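/- On a 3-dimensional Riemannian manifold, for any symmetric (0,2)-tensor field b the Riemann-compatibility defect equals a metric combination of Ricci commutators: b(R(Y,Z)W,X) + b(R(Z,X)W,Y) + b(R(X,Y)W,Z) = g(Z,W)(b(Ric Y, X) − b(Ric X, Y)) + g(X,W)(b(Ric Z, Y) − b(Ric Y, Z)) + g(Y,W)(b(Ric X, Z) − b(Ric Z, X)), where Ric is the Ricci operator. In particular, any symmetric b commuting with the Ricci operator is Riemann compatible, and the Ricci tensor itself is always Riemann compatible in dimension 3. -/
import Mathlib


open RealInnerProductSpace

/-!
Pointwise formalization: on a 3-dimensional Riemannian manifold the Riemann tensor is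
determined by the Ricci tensor:
`R(X,Y,Z,W) = g(X,W) ric(Y,Z) + g(Y,Z) ric(X,W) − g(Y,W) ric(X,Z) − g(X,Z) ric(Y,W)
  − (S/2)(g(X,W) g(Y,Z) − g(X,Z) g(Y,W))`,
where `ric(X,Y) = ⟪Ric X, Y⟫` is the Ricci bilinear form of the self-adjoint Ricci
operator `Ric` and `S` is the scalar curvature.  We model the tangent space as a
3-dimensional real inner product space, with `R X Y Z = R(X,Y)Z`.
-/

/-- In dimension 3, for any symmetric `(0,2)`-tensor `b` the Riemann-compatibility
defect equals a metric combination of Ricci commutators; in particular any symmetric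
`b` commuting with the Ricci operator is Riemann compatible, and the Ricci tensor
itself is always Riemann compatible. -/
theorem riemann_compatibility_dim_three
    {V : Type*} [NormedAddCommGroup V] [InnerProductSpace ℝ V] [FiniteDimensional ℝ V]
    (hdim : Module.finrank ℝ V = 3)
    (Ric : V →ₗ[ℝ] V)
    (hRic : ∀ X Y : V, ⟪Ric X, Y⟫ = ⟪X, Ric Y⟫)
    (S : ℝ)
    (R : V → V → V → V)
    (hR : ∀ X Y Z W : V,
      ⟪R X Y Z, W⟫ =
        ⟪X, W⟫ * ⟪Ric Y, Z⟫ + ⟪Y, Z⟫ * ⟪Ric X, W⟫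
          - ⟪Y, W⟫ * ⟪Ric X, Z⟫ - ⟪X, Z⟫ * ⟪Ric Y, W⟫
          - S / 2 * (⟪X, W⟫ * ⟪Y, Z⟫ - ⟪X, Z⟫ * ⟪Y, W⟫)) :
    (∀ (b : V →ₗ[ℝ] V →ₗ[ℝ] ℝ), (∀ X Y : V, b X Y = b Y X) →
      ∀ X Y Z W : V,
        b (R Y Z W) X + b (R Z X W) Y + b (R X Y W) Z =
          ⟪Z, W⟫ * (b (Ric Y) X - b (Ric X) Y)
            + ⟪X, W⟫ * (b (Ric Z) Y - b (Ric Y) Z)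
            + ⟪Y, W⟫ * (b (Ric X) Z - b (Ric Z) X)) ∧
    (∀ (b : V →ₗ[ℝ] V →ₗ[ℝ] ℝ), (∀ X Y : V, b X Y = b Y X) →
      (∀ X Y : V, b (Ric X) Y = b X (Ric Y)) →
      ∀ X Y Z W : V, b (R Y Z W) X + b (R Z X W) Y + b (R X Y W) Z = 0) ∧
    (∀ X Y Z W : V,
      ⟪Ric (R Y Z W), X⟫ + ⟪Ric (R Z X W), Y⟫ + ⟪Ric (R X Y W), Z⟫ = 0) := by

  have hsym : ∀ X Y : V, ⟪Ric X, Y⟫ = ⟪Ric Y, X⟫ := by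
    intro X Y
    rw [hRic, real_inner_comm]
  have hform : ∀ X Y Z : V,
      R X Y Z = ⟪Ric Y, Z⟫ • X + ⟪Y, Z⟫ • Ric X - ⟪Ric X, Z⟫ • Y - ⟪X, Z⟫ • Ric Y
        - (S / 2) • (⟪Y, Z⟫ • X - ⟪X, Z⟫ • Y) := by
    intro X Y Z
    apply ext_inner_right ℝ
    intro W
    rw [hR]
    simp only [inner_sub_left, inner_add_left, inner_smul_left, RCLike.conj_to_real,
      real_inner_comm X W, real_inner_comm Y W, real_inner_comm (Ric X) W,
      real_inner_comm (Ric Y) W]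
    rw [hRic X W, hRic Y W]
    ring
  have key : ∀ (b : V →ₗ[ℝ] V →ₗ[ℝ] ℝ), (∀ X Y : V, b X Y = b Y X) →
      ∀ X Y Z W : V,
        b (R Y Z W) X + b (R Z X W) Y + b (R X Y W) Z =
          ⟪Z, W⟫ * (b (Ric Y) X - b (Ric X) Y)
            + ⟪X, W⟫ * (b (Ric Z) Y - b (Ric Y) Z)
            + ⟪Y, W⟫ * (b (Ric X) Z - b (Ric Z) X) := by
    intro b hb X Y Z W
    simp only [hform, map_sub, map_add, map_smul, LinearMap.sub_apply, LinearMap.add_apply,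
      LinearMap.smul_apply, smul_eq_mul]
    rw [hb Y X, hb Z X, hb Z Y, hsym Z W, hsym X W, hsym Y W]
    ring
  refine ⟨key, ?_, ?_⟩
  · intro b hb hcomm X Y Z W
    rw [key b hb X Y Z W]
    rw [hcomm Y X, hb Y (Ric X), hcomm Z Y, hb Z (Ric Y), hcomm X Z, hb X (Ric Z)]
    ring
  · intro X Y Z W
    have hb : ∀ X Y : V, ⟪Ric X, Y⟫ = ⟪Ric Y, X⟫ := hsym
    let b : V →ₗ[ℝ] V →ₗ[ℝ] ℝ := LinearMap.mk₂ ℝ (fun X Y => ⟪Ric X, Y⟫)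
      (fun x y z => by simp [inner_add_left]) (fun c x y => by simp [inner_smul_left])
      (fun x y z => by simp [inner_add_right]) (fun c x y => by simp [inner_smul_right])
    have h := (fun X Y Z W => by
      have := key b (fun X Y => hsym X Y) X Y Z W
      simpa [b] using this : ∀ X Y Z W : V,
        ⟪Ric (R Y Z W), X⟫ + ⟪Ric (R Z X W), Y⟫ + ⟪Ric (R X Y W), Z⟫ =
          ⟪Z, W⟫ * (⟪Ric (Ric Y), X⟫ - ⟪Ric (Ric X), Y⟫)
            + ⟪X, W⟫ * (⟪Ric (Ric Z), Y⟫ - ⟪Ric (Ric Y), Z⟫)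
            + ⟪Y, W⟫ * (⟪Ric (Ric X), Z⟫ - ⟪Ric (Ric Z), X⟫))
    rw [h X Y Z W]
    have hc : ∀ X Y : V, ⟪Ric (Ric X), Y⟫ = ⟪Ric (Ric Y), X⟫ := by
      intro X Y
      rw [hRic (Ric X) Y, hRic X (Ric Y), real_inner_comm]
    rw [hc Y X, hc Z Y, hc X Z]
    ring
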